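/- In an additive transition system, the relation of substitutability on states is transitive: if q₁ is substitutable with q₂ and q₂ is substitutable with q₃, then q₁ is substitutable with q₃. -/

import Mathlib

/-- Reachability: reflexive-transitive closure of the step relation. -/
def Reaches {Q : Type*} (step : (Q → ℕ) → (Q → ℕ) → Prop) : (Q → ℕ) → (Q → ℕ) → Prop :=
  Relation.ReflTransGen step

/-- States q₁ and q₂ are n-substitutable: there is an input x and a
configuration b such that both n·q₁ + b and n·q₂ + b are reachable from I(x). -/
def NSubstitutable {Q Sg : Type*} [DecidableEq Q]
    (step : (Q → ℕ) → (Q → ℕ) → Prop) (I : (Sg → ℕ) → (Q → ℕ))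
    (n : ℕ) (q₁ q₂ : Q) : Prop :=
  ∃ (x : Sg → ℕ) (b : Q → ℕ), x ≠ 0 ∧
    Reaches step (I x) (Pi.single q₁ n + b) ∧
    Reaches step (I x) (Pi.single q₂ n + b)

/-- States are substitutable if they are n-substitutable for some n ≥ 1. -/
def Substitutable {Q Sg : Type*} [DecidableEq Q]
    (step : (Q → ℕ) → (Q → ℕ) → Prop) (I : (Sg → ℕ) → (Q → ℕ))
    (q₁ q₂ : Q) : Prop :=
  ∃ n, 0 < n ∧ NSubstitutable step I n q₁ q₂

set_option linter.unusedSectionVars false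

section Aux

variable {Q Sg : Type*} [DecidableEq Q]
variable {step : (Q → ℕ) → (Q → ℕ) → Prop}

lemma reaches_add (hadd : ∀ c c' d : Q → ℕ, step c c' → step (c + d) (c' + d))
    {c c' : Q → ℕ} (d : Q → ℕ) (h : Reaches step c c') :
    Reaches step (c + d) (c' + d) := by
  induction h with
  | refl => exact Relation.ReflTransGen.refl
  | tail _ hs ih => exact ih.tail (hadd _ _ d hs)

lemma reaches_add_left (hadd : ∀ c c' d : Q → ℕ, step c c' → step (c + d) (c' + d))
    {c c' : Q → ℕ} (d : Q → ℕ) (h : Reaches step c c') :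
    Reaches step (d + c) (d + c') := by
  rw [add_comm d c, add_comm d c']; exact reaches_add hadd d h

lemma reaches_smul (hadd : ∀ c c' d : Q → ℕ, step c c' → step (c + d) (c' + d))
    {c c' : Q → ℕ} (m : ℕ) (h : Reaches step c c') :
    Reaches step (m • c) (m • c') := by
  induction m with
  | zero => simp; exact Relation.ReflTransGen.refl
  | succ k ih =>
    rw [succ_nsmul, succ_nsmul]
    exact (reaches_add hadd c ih).trans (reaches_add_left hadd (k • c') h)

lemma I_smul {I : (Sg → ℕ) → (Q → ℕ)}
    (hI : ∀ x y : Sg → ℕ, I (x + y) = I x + I y) (x : Sg → ℕ) :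
    ∀ m : ℕ, I ((m + 1) • x) = (m + 1) • I x := by
  intro m
  induction m with
  | zero => simp
  | succ k ih =>
    rw [succ_nsmul x (k+1), hI, ih, succ_nsmul (I x) (k+1), succ_nsmul (I x) k]

lemma nsubstitutable_mul (hadd : ∀ c c' d : Q → ℕ, step c c' → step (c + d) (c' + d))
    {I : (Sg → ℕ) → (Q → ℕ)}
    (hI : ∀ x y : Sg → ℕ, I (x + y) = I x + I y)
    {n : ℕ} {q q' : Q} (h : NSubstitutable step I n q q') (m : ℕ) (hm : 0 < m) :
    NSubstitutable step I (m * n) q q' := by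
  obtain ⟨x, b, hx, h1, h2⟩ := h
  obtain ⟨k, rfl⟩ : ∃ k, m = k + 1 := ⟨m - 1, (Nat.succ_pred_eq_of_pos hm).symm⟩
  refine ⟨(k + 1) • x, (k + 1) • b, ?_, ?_, ?_⟩
  · intro h0
    apply hx
    funext i
    have := congrFun h0 i
    simp at this
    simpa using this
  · rw [I_smul hI]
    have := reaches_smul hadd (k + 1) h1
    convert this using 1
    funext i
    by_cases hi : i = q
    · subst hi; simp [Pi.single_eq_same, mul_comm]; ring
    · simp [Pi.single_eq_of_ne hi]
  · rw [I_smul hI]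
    have := reaches_smul hadd (k + 1) h2
    convert this using 1
    funext i
    by_cases hi : i = q'
    · subst hi; simp [Pi.single_eq_same, mul_comm]; ring
    · simp [Pi.single_eq_of_ne hi]

end Aux

/-- Substitutability is transitive in an additive transition system with an
additive input map. -/
theorem substitutable_trans {Q Sg : Type*} [Fintype Q] [DecidableEq Q]
    (step : (Q → ℕ) → (Q → ℕ) → Prop)
    (hadd : ∀ c c' d : Q → ℕ, step c c' → step (c + d) (c' + d))
    (I : (Sg → ℕ) → (Q → ℕ))
    (hI : ∀ x y : Sg → ℕ, I (x + y) = I x + I y)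
    (q₁ q₂ q₃ : Q)
    (h12 : Substitutable step I q₁ q₂) (h23 : Substitutable step I q₂ q₃) :
    Substitutable step I q₁ q₃ := by
  obtain ⟨n₁, hn₁, h12⟩ := h12
  obtain ⟨n₂, hn₂, h23⟩ := h23
  have h12' : NSubstitutable step I (n₁ * n₂) q₁ q₂ := by
    rw [mul_comm]; exact nsubstitutable_mul hadd hI h12 n₂ hn₂
  have h23' : NSubstitutable step I (n₁ * n₂) q₂ q₃ :=
    nsubstitutable_mul hadd hI h23 n₁ hn₁
  set n := n₁ * n₂ with hn
  obtain ⟨x, b, hx, hx1, hx2⟩ := h12'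
  obtain ⟨y, c, hy, hy2, hy3⟩ := h23'
  refine ⟨n, Nat.mul_pos hn₁ hn₂, x + y, b + (Pi.single q₂ n + c), ?_, ?_, ?_⟩
  · intro h0
    apply hx
    funext i
    have := congrFun h0 i
    simp at this
    simp [this.1]
  · rw [hI]
    have s1 : Reaches step (I x + I y) ((Pi.single q₁ n + b) + I y) :=
      reaches_add hadd (I y) hx1
    have s2 : Reaches step ((Pi.single q₁ n + b) + I y)
        ((Pi.single q₁ n + b) + (Pi.single q₂ n + c)) :=
      reaches_add_left hadd _ hy2
    have : Reaches step _ _ := s1.trans s2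
    convert this using 1
    ring
  · rw [hI]
    have s1 : Reaches step (I x + I y) ((Pi.single q₂ n + b) + I y) :=
      reaches_add hadd (I y) hx2
    have s2 : Reaches step ((Pi.single q₂ n + b) + I y)
        ((Pi.single q₂ n + b) + (Pi.single q₃ n + c)) :=
      reaches_add_left hadd _ hy3
    have : Reaches step _ _ := s1.trans s2
    convert this using 1
    ring
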